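/- Let k ≥ 1, let φ ∈ ℝ^k satisfy φ_j > 0 for all j, let Σ be a diagonal k×k matrix with diagonal entries Σ_jj > 0, and let p ≥ 1. Then the function g(w) = (Σ_j w_j φ_j) / sqrt(Σ_j Σ_jj w_j²), defined on the feasible set D = {w ∈ ℝ^k : w_j ≥ 0 for all j, ‖w‖_p = 1}, attains its maximum over D uniquely at the point w* = Σ⁻¹φ / ‖Σ⁻¹φ‖_p, i.e. w*_j = (φ_j/Σ_jj) / ‖Σ⁻¹φ‖_p. (This is the user-optimal weight vector of Theorem 4.1, since user utility is a strictly increasing function of g(w).) -/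

import Mathlib

/-- The user-optimal weight vector: `g(w) = (∑ wⱼφⱼ)/√(∑ Σⱼⱼwⱼ²)`
attains its maximum over `D = {w : w ≥ 0, ‖w‖ₚ = 1}` uniquely at
`w* = Σ⁻¹φ / ‖Σ⁻¹φ‖ₚ`. -/
theorem stmt_0 (k : ℕ) (hk : 1 ≤ k) (p : ℝ) (hp : 1 ≤ p)
    (φ S : Fin k → ℝ) (hφ : ∀ j, 0 < φ j) (hS : ∀ j, 0 < S j) :
    let pnorm : (Fin k → ℝ) → ℝ := fun w => (∑ j, |w j| ^ p) ^ (1 / p)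
    let g : (Fin k → ℝ) → ℝ :=
      fun w => (∑ j, w j * φ j) / Real.sqrt (∑ j, S j * w j ^ 2)
    let D : Set (Fin k → ℝ) := {w | (∀ j, 0 ≤ w j) ∧ pnorm w = 1}
    let wstar : Fin k → ℝ := fun j => (φ j / S j) / pnorm (fun i => φ i / S i)
    wstar ∈ D ∧ (∀ w ∈ D, g w ≤ g wstar) ∧ (∀ w ∈ D, g w = g wstar → w = wstar) := by
  intro pnorm g D wstar
  haveI : NeZero k := ⟨by omega⟩
  have hp0 : (0:ℝ) < p := lt_of_lt_of_le one_pos hp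
  have hp0' : p ≠ 0 := ne_of_gt hp0
  -- homogeneity of pnorm
  have hscale : ∀ (c : ℝ), 0 ≤ c → ∀ v : Fin k → ℝ,
      pnorm (fun j => c * v j) = c * pnorm v := by
    intro c hc v
    simp only [pnorm]
    have h1 : ∀ j : Fin k, |c * v j| ^ p = c ^ p * |v j| ^ p := by
      intro j
      rw [abs_mul, abs_of_nonneg hc, Real.mul_rpow hc (abs_nonneg _)]
    rw [Finset.sum_congr rfl (fun j _ => h1 j), ← Finset.mul_sum,
      Real.mul_rpow (Real.rpow_nonneg hc p)
        (Finset.sum_nonneg fun j _ => Real.rpow_nonneg (abs_nonneg _) p),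
      ← Real.rpow_mul hc, mul_one_div, div_self hp0', Real.rpow_one]
  -- positivity of N
  set N : ℝ := pnorm (fun i => φ i / S i) with hNdef
  have hNpos : 0 < N := by
    apply Real.rpow_pos_of_pos
    apply Finset.sum_pos
    · intro j _
      exact Real.rpow_pos_of_pos (abs_pos.2 (ne_of_gt (div_pos (hφ j) (hS j)))) p
    · exact Finset.univ_nonempty
  have hNne : N ≠ 0 := ne_of_gt hNpos
  -- wstar ∈ D
  have hwstar_nonneg : ∀ j, 0 ≤ wstar j := fun j =>
    div_nonneg (div_nonneg (hφ j).le (hS j).le) hNpos.le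
  have hwstar_eq : wstar = fun j => (1 / N) * (φ j / S j) := by
    funext j; simp only [wstar]; rw [div_eq_mul_inv, one_div, mul_comm]
  have hwstar_norm : pnorm wstar = 1 := by
    rw [hwstar_eq, hscale (1 / N) (by positivity) _, ← hNdef, one_div_mul_cancel hNne]
  have hwD : wstar ∈ D := ⟨hwstar_nonneg, hwstar_norm⟩
  -- value at wstar
  set T : ℝ := ∑ j, φ j ^ 2 / S j with hTdef
  have hTpos : 0 < T := by
    apply Finset.sum_pos (fun j _ => div_pos (pow_pos (hφ j) 2) (hS j)) Finset.univ_nonempty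
  have hnum : (∑ j, wstar j * φ j) = T / N := by
    rw [hTdef, Finset.sum_div]
    refine Finset.sum_congr rfl fun j _ => ?_
    simp only [wstar]
    have h1 : (pnorm fun i => φ i / S i) ≠ 0 := hNne
    have h2 : S j ≠ 0 := (hS j).ne'
    field_simp
    ring
  have hden : (∑ j, S j * wstar j ^ 2) = T / N ^ 2 := by
    rw [hTdef, Finset.sum_div]
    refine Finset.sum_congr rfl fun j _ => ?_
    simp only [wstar]
    have h1 : (pnorm fun i => φ i / S i) ≠ 0 := hNne
    have h2 : S j ≠ 0 := (hS j).ne'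
    field_simp
    ring
  have hsqT : 0 < Real.sqrt T := Real.sqrt_pos.2 hTpos
  have hgws : g wstar = Real.sqrt T := by
    simp only [g]
    rw [hnum, hden, Real.sqrt_div hTpos.le, Real.sqrt_sq hNpos.le]
    rw [div_div_div_cancel_right₀ hNne]
    exact Real.div_sqrt
  -- square-root trick for denominators of g
  have hQpos : ∀ w ∈ D, 0 < ∑ j, S j * w j ^ 2 := by
    intro w hw
    obtain ⟨hw0, hw1⟩ := hw
    have hne : ∃ j, w j ≠ 0 := by
      by_contra h
      push_neg at h
      have : pnorm w = 0 := by
        simp only [pnorm]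
        rw [Finset.sum_eq_zero fun j _ => by rw [h j]; simp [Real.zero_rpow hp0']]
        exact Real.zero_rpow (one_div_ne_zero hp0')
      rw [hw1] at this; norm_num at this
    obtain ⟨j, hj⟩ := hne
    refine Finset.sum_pos' (fun i _ => mul_nonneg (hS i).le (sq_nonneg _))
      ⟨j, Finset.mem_univ j, ?_⟩
    have hwj : 0 < w j := lt_of_le_of_ne (hw0 j) (Ne.symm hj)
    exact mul_pos (hS j) (pow_pos hwj 2)
  -- Cauchy-Schwarz bound: ∑ w φ ≤ √Q * √T
  have hCS : ∀ w : Fin k → ℝ,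
      (∑ j, w j * φ j) ≤ Real.sqrt (∑ j, S j * w j ^ 2) * Real.sqrt T := by
    intro w
    have h := Real.sum_mul_le_sqrt_mul_sqrt Finset.univ
      (fun j => Real.sqrt (S j) * w j) (fun j => φ j / Real.sqrt (S j))
    have e1 : ∀ j : Fin k, (Real.sqrt (S j) * w j) * (φ j / Real.sqrt (S j)) = w j * φ j := by
      intro j
      have : Real.sqrt (S j) ≠ 0 := (Real.sqrt_pos.2 (hS j)).ne'
      field_simp
    have e2 : ∀ j : Fin k, (Real.sqrt (S j) * w j) ^ 2 = S j * w j ^ 2 := by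
      intro j; rw [mul_pow, Real.sq_sqrt (hS j).le]
    have e3 : ∀ j : Fin k, (φ j / Real.sqrt (S j)) ^ 2 = φ j ^ 2 / S j := by
      intro j; rw [div_pow, Real.sq_sqrt (hS j).le]
    rw [Finset.sum_congr rfl fun j _ => e1 j, Finset.sum_congr rfl fun j _ => e2 j,
      Finset.sum_congr rfl fun j _ => e3 j] at h
    exact h
  refine ⟨hwD, ?_, ?_⟩
  · intro w hw
    rw [hgws]
    simp only [g]
    rw [div_le_iff₀ (Real.sqrt_pos.2 (hQpos w hw))]
    rw [mul_comm]
    exact hCS w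
  · intro w hw heq
    obtain ⟨hw0, hw1⟩ := hw
    rw [hgws] at heq
    set Q : ℝ := ∑ j, S j * w j ^ 2 with hQdef
    have hQ : 0 < Q := hQpos w ⟨hw0, hw1⟩
    have hsum : (∑ j, w j * φ j) = Real.sqrt Q * Real.sqrt T := by
      have : (∑ j, w j * φ j) / Real.sqrt Q = Real.sqrt T := heq
      rw [div_eq_iff (Real.sqrt_pos.2 hQ).ne'] at this
      rw [this]; ring
    -- equality in Cauchy-Schwarz via inner product space
    set x : EuclideanSpace ℝ (Fin k) := WithLp.toLp 2 (fun j => Real.sqrt (S j) * w j) with hxdef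
    set y : EuclideanSpace ℝ (Fin k) := WithLp.toLp 2 (fun j => φ j / Real.sqrt (S j)) with hydef
    have hxnorm : ‖x‖ = Real.sqrt Q := by
      rw [EuclideanSpace.norm_eq]
      congr 1
      refine Finset.sum_congr rfl fun j _ => ?_
      simp only [hxdef, Real.norm_eq_abs, sq_abs]
      rw [mul_pow, Real.sq_sqrt (hS j).le]
    have hynorm : ‖y‖ = Real.sqrt T := by
      rw [EuclideanSpace.norm_eq]
      congr 1
      refine Finset.sum_congr rfl fun j _ => ?_
      simp only [hydef, Real.norm_eq_abs, sq_abs]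
      rw [div_pow, Real.sq_sqrt (hS j).le]
    have hinner : (inner ℝ x y : ℝ) = ∑ j, w j * φ j := by
      rw [PiLp.inner_apply]
      refine Finset.sum_congr rfl fun j _ => ?_
      simp only [hxdef, hydef, RCLike.inner_apply, conj_trivial]
      have : Real.sqrt (S j) ≠ 0 := (Real.sqrt_pos.2 (hS j)).ne'
      field_simp
    have hkey : ‖y‖ • x = ‖x‖ • y := by
      rw [← inner_eq_norm_mul_iff_real, hinner, hxnorm, hynorm, hsum]
    have hcoord : ∀ j, Real.sqrt T * (Real.sqrt (S j) * w j)
        = Real.sqrt Q * (φ j / Real.sqrt (S j)) := by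
      intro j
      have := congrArg (fun v : EuclideanSpace ℝ (Fin k) => v j) hkey
      rw [hxnorm, hynorm] at this
      simpa [hxdef, hydef] using this
    set c : ℝ := Real.sqrt Q / Real.sqrt T with hcdef
    have hcpos : 0 < c := div_pos (Real.sqrt_pos.2 hQ) hsqT
    have hwc : w = fun j => c * (φ j / S j) := by
      funext j
      have h := hcoord j
      have hsj : Real.sqrt (S j) ≠ 0 := (Real.sqrt_pos.2 (hS j)).ne'
      have hSj : S j ≠ 0 := (hS j).ne'
      have hsq : Real.sqrt (S j) * Real.sqrt (S j) = S j := Real.mul_self_sqrt (hS j).le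
      have h2 : Real.sqrt T * S j * w j = Real.sqrt Q * φ j := by
        field_simp at h
        linear_combination h - Real.sqrt T * w j * hsq
      rw [hcdef, div_mul_div_comm, eq_div_iff (mul_ne_zero hsqT.ne' hSj)]
      linear_combination h2
    have hc1 : c * N = 1 := by
      rw [← hscale c hcpos.le (fun i => φ i / S i), ← hwc, hw1]
    have hcN : c = 1 / N := eq_one_div_of_mul_eq_one_left (by linear_combination hc1)
    funext j
    rw [hwc, hcN]
    simp only [wstar]
    rw [div_eq_mul_inv (φ j / S j) N, one_div, mul_comm]
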